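/- Let F be a field of characteristic different from 2 and Q a quaternion F-algebra. If p is an invertible pure quaternion, then Q is isomorphic to (p², d)_F for some d ∈ F^×; explicitly, choosing an invertible pure quaternion q anticommuting with p, one has Q ≅ (p², q²)_F. -/

import Mathlib

open Quaternion

section Aux

variable {F : Type*} [Field F] {a b : F}

/-- A pure quaternion with nonzero scalar square is a unit. -/
lemma aux_isUnit {d : F} (hd : d ≠ 0) (q : ℍ[F, a, b])
    (hqq : q * q = algebraMap F ℍ[F, a, b] d) : IsUnit q := by
  refine ⟨⟨q, d⁻¹ • q, ?_, ?_⟩, rfl⟩ <;>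
  · simp only [mul_smul_comm, smul_mul_assoc, hqq, Algebra.algebraMap_eq_smul_one, smul_smul,
      inv_mul_cancel₀ hd, one_smul]

/-- Key lemma: given anticommuting `p, q` with scalar squares `α, d ≠ 0`, we get the
algebra isomorphism. -/
lemma aux_equiv (hchar : ringChar F ≠ 2) {α d : F} (hα : α ≠ 0) (hd : d ≠ 0)
    (p q : ℍ[F, a, b]) (hp : p.re = 0) (hpne : p ≠ 0)
    (hpp : p * p = algebraMap F ℍ[F, a, b] α)
    (hqq : q * q = algebraMap F ℍ[F, a, b] d)
    (hanti : p * q = -(q * p)) :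
    Nonempty (ℍ[F, a, b] ≃ₐ[F] ℍ[F, α, d]) := by
  have h2 : (2 : F) ≠ 0 := Ring.two_ne_zero hchar
  -- the quaternionic basis p, q, p*q
  let B : QuaternionAlgebra.Basis ℍ[F, a, b] α 0 d :=
    { i := p, j := q, k := p * q
      i_mul_i := by rw [hpp, Algebra.algebraMap_eq_smul_one, zero_smul, add_zero]
      j_mul_j := by rw [hqq, Algebra.algebraMap_eq_smul_one]
      i_mul_j := rfl
      j_mul_i := by rw [hanti, zero_smul, zero_sub, neg_neg] }
  let φ : ℍ[F, α, d] →ₐ[F] ℍ[F, a, b] := B.liftHom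
  have hinj : Function.Injective φ := by
    rw [injective_iff_map_eq_zero]
    intro w hw
    have hE : algebraMap F ℍ[F, a, b] w.re + w.imI • p + w.imJ • q + w.imK • (p * q) = 0 := hw
    set s : ℍ[F, a, b] := algebraMap F ℍ[F, a, b] w.re + w.imI • p with hs
    set r : ℍ[F, a, b] := algebraMap F ℍ[F, a, b] w.imJ + w.imK • p with hr
    clear_value s r
    have hE' : s + r * q = 0 := by
      rw [hr, add_mul, smul_mul_assoc, Algebra.algebraMap_eq_smul_one (A := ℍ[F, a, b]) w.imJ,
        smul_one_mul, ← add_assoc]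
      exact hE
    have hps : p * s = s * p := by
      rw [hs, Algebra.algebraMap_eq_smul_one]
      simp [mul_add, add_mul, mul_smul_comm, smul_mul_assoc]
    have hpr : p * r = r * p := by
      rw [hr, Algebra.algebraMap_eq_smul_one]
      simp [mul_add, add_mul, mul_smul_comm, smul_mul_assoc]
    -- p * E + E * p = 2 (s * p)
    have e1 : p * (r * q) = -(r * q * p) := by
      rw [← mul_assoc, hpr, mul_assoc, hanti, mul_neg, mul_assoc]
    have key : s * p + s * p = 0 := by
      have hc : p * (s + r * q) + (s + r * q) * p = 0 := by rw [hE']; simp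
      calc s * p + s * p = p * (s + r * q) + (s + r * q) * p := by
            rw [mul_add, add_mul, e1, hps]; abel
        _ = 0 := hc
    have hsp : s * p = 0 := by
      have h2s : (2 : F) • (s * p) = 0 := by rw [two_smul]; exact key
      exact (smul_eq_zero.mp h2s).resolve_left h2
    have hs0 : s = 0 := by
      have hsq : α • s = 0 := by
        have : s * (p * p) = 0 := by rw [← mul_assoc, hsp, zero_mul]
        rwa [hpp, Algebra.algebraMap_eq_smul_one, mul_smul_comm, mul_one] at this
      exact (smul_eq_zero.mp hsq).resolve_left hα
    have ht : w.re = 0 := by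
      have := congrArg QuaternionAlgebra.re hs0
      simpa [hs, hp] using this
    have hu : w.imI = 0 := by
      have hup : w.imI • p = 0 := by
        have := hs0; rw [hs, ht, map_zero, zero_add] at this; exact this
      exact (smul_eq_zero.mp hup).resolve_right hpne
    have hr0 : r = 0 := by
      have hrq : r * q = 0 := by have := hE'; rwa [hs0, zero_add] at this
      have hdr : d • r = 0 := by
        have : r * (q * q) = 0 := by rw [← mul_assoc, hrq, zero_mul]
        rwa [hqq, Algebra.algebraMap_eq_smul_one, mul_smul_comm, mul_one] at this
      exact (smul_eq_zero.mp hdr).resolve_left hd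
    have hv : w.imJ = 0 := by
      have := congrArg QuaternionAlgebra.re hr0
      simpa [hr, hp] using this
    have hw' : w.imK = 0 := by
      have hwp : w.imK • p = 0 := by
        have := hr0; rw [hr, hv, map_zero, zero_add] at this; exact this
      exact (smul_eq_zero.mp hwp).resolve_right hpne
    ext <;> assumption
  have hsurj : Function.Surjective φ := by
    have hdim : Module.finrank F ℍ[F, α, d] = Module.finrank F ℍ[F, a, b] := by
      rw [QuaternionAlgebra.finrank_eq_four, QuaternionAlgebra.finrank_eq_four]
    exact (LinearMap.injective_iff_surjective_of_finrank_eq_finrank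
      (f := φ.toLinearMap) hdim).mp hinj
  exact ⟨(AlgEquiv.ofBijective φ ⟨hinj, hsurj⟩).symm⟩

end Aux

/-- In a quaternion algebra `Q = (a,b)_F` (`char F ≠ 2`, `a, b ∈ F^×`),
if `p` is an invertible pure quaternion then there is an invertible pure quaternion `q`
anticommuting with `p`, and `Q ≅ (p², q²)_F`, where `p², q²` are nonzero scalars. -/
theorem stmt15 (F : Type*) [Field F] (hchar : ringChar F ≠ 2)
    (a b : F) (ha : a ≠ 0) (hb : b ≠ 0)
    (p : ℍ[F, a, b]) (hp : p.re = 0) (hpu : IsUnit p) :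
    ∃ q : ℍ[F, a, b], q.re = 0 ∧ IsUnit q ∧ p * q = -(q * p) ∧
      ∃ α d : F, α ≠ 0 ∧ d ≠ 0 ∧
        p * p = algebraMap F ℍ[F, a, b] α ∧ q * q = algebraMap F ℍ[F, a, b] d ∧
        Nonempty (ℍ[F, a, b] ≃ₐ[F] ℍ[F, α, d]) := by
  have h2 : (2 : F) ≠ 0 := Ring.two_ne_zero hchar
  have hpne : p ≠ 0 := hpu.ne_zero
  set x := p.imI with hx
  set y := p.imJ with hy
  set z := p.imK with hz
  set α : F := a * x * x + b * y * y - a * b * z * z with hα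
  have hpp : p * p = algebraMap F ℍ[F, a, b] α := by
    ext <;> simp [← hx, ← hy, ← hz, hp, hα] <;> ring
  have hαne : α ≠ 0 := by
    intro h0
    have : IsUnit (p * p) := hpu.mul hpu
    rw [hpp, h0, map_zero] at this
    exact not_isUnit_zero this
  have pack : ∀ q : ℍ[F, a, b], ∀ d : F, d ≠ 0 → q.re = 0 → p * q = -(q * p) →
      q * q = algebraMap F ℍ[F, a, b] d →
      ∃ q : ℍ[F, a, b], q.re = 0 ∧ IsUnit q ∧ p * q = -(q * p) ∧
        ∃ α d : F, α ≠ 0 ∧ d ≠ 0 ∧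
          p * p = algebraMap F ℍ[F, a, b] α ∧ q * q = algebraMap F ℍ[F, a, b] d ∧
          Nonempty (ℍ[F, a, b] ≃ₐ[F] ℍ[F, α, d]) := by
    intro q d hd hqre hanti hqq
    exact ⟨q, hqre, aux_isUnit hd q hqq, hanti, α, d, hαne, hd, hpp, hqq,
      aux_equiv hchar hαne hd p q hp hpne hpp hqq hanti⟩
  by_cases h1 : a * x * x + b * y * y ≠ 0
  · refine pack ⟨0, b * y, -(a * x), 0⟩ (a * b * (a * x * x + b * y * y))
      (by exact mul_ne_zero (mul_ne_zero ha hb) h1) rfl ?_ ?_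
    · ext <;> simp [← hx, ← hy, ← hz, hp] <;> ring
    · ext <;> simp [← hx, ← hy, ← hz, hp] <;> ring
  push_neg at h1
  by_cases h2' : b * z * z - x * x ≠ 0
  · refine pack ⟨0, b * z, 0, x⟩ (a * b * (b * z * z - x * x))
      (by exact mul_ne_zero (mul_ne_zero ha hb) h2') rfl ?_ ?_
    · ext <;> simp [← hx, ← hy, ← hz, hp] <;> ring
    · ext <;> simp [← hx, ← hy, ← hz, hp] <;> ring
  push_neg at h2'
  have h3 : a * z * z - y * y ≠ 0 := by
    intro h3'
    have hzz : (2 * a) * b * (z * z) = 0 := by linear_combination h1 + a * h2' + b * h3'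
    have hz0 : z = 0 := mul_self_eq_zero.mp (((mul_eq_zero.mp hzz).resolve_left
      (mul_ne_zero (mul_ne_zero h2 ha) hb)))
    have hx0 : x = 0 := by
      have : x * x = 0 := by rw [hz0] at h2'; linear_combination -h2'
      exact mul_self_eq_zero.mp this
    have hy0 : y = 0 := by
      have : b * (y * y) = 0 := by rw [hx0] at h1; linear_combination h1
      exact mul_self_eq_zero.mp ((mul_eq_zero.mp this).resolve_left hb)
    apply hpne
    ext <;> simp [hp, ← hx, ← hy, ← hz, hx0, hy0, hz0]
  refine pack ⟨0, 0, a * z, y⟩ (a * b * (a * z * z - y * y))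
    (mul_ne_zero (mul_ne_zero ha hb) h3) rfl ?_ ?_
  · ext <;> simp [← hx, ← hy, ← hz, hp] <;> ring
  · ext <;> simp [← hx, ← hy, ← hz, hp] <;> ring
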